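/- The pigeonhole partition characteristic 𝐩𝐚𝐫_{1c} equals min{𝔟, 𝔰}: the least cardinality of a set 𝒳 of functions ℕ → ℕ such that no single infinite H ⊆ ℕ has the property that every f ∈ 𝒳 is constant or injective on a cofinite subset of H equals the minimum of the bounding number and the splitting number. -/
import Mathlib

open Cardinal Set Filter

/-- `g` eventually majorizes `f`. -/
def EvMaj (g f : ℕ → ℕ) : Prop := ∀ᶠ n in Filter.atTop, f n < g n

/-- The bounding number 𝔟. -/
noncomputable def boundNum : Cardinal :=
  sInf {c : Cardinal | ∃ B : Set (ℕ → ℕ),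
    (∀ g : ℕ → ℕ, ∃ f ∈ B, ¬ EvMaj g f) ∧ c = #B}

/-- `X` splits `Y`: both `X ∩ Y` and `Y \ X` are infinite. -/
def Splits (X Y : Set ℕ) : Prop := (X ∩ Y).Infinite ∧ (Y \ X).Infinite

/-- The splitting number 𝔰. -/
noncomputable def splitNum : Cardinal :=
  sInf {c : Cardinal | ∃ S : Set (Set ℕ),
    (∀ Y : Set ℕ, Y.Infinite → ∃ X ∈ S, Splits X Y) ∧ c = #S}

/-- `f` is constant or injective on a cofinite subset of `H`. -/
def ConstOrInjModFin (f : ℕ → ℕ) (H : Set ℕ) : Prop :=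
  ∃ F : Set ℕ, F.Finite ∧ F ⊆ H ∧
    ((∃ m : ℕ, ∀ n ∈ H \ F, f n = m) ∨ Set.InjOn f (H \ F))

/-- The pigeonhole partition characteristic 𝐩𝐚𝐫_{1c}. -/
noncomputable def parNum1c : Cardinal :=
  sInf {κ : Cardinal | ∃ 𝒳 : Set (ℕ → ℕ),
    (¬ ∃ H : Set ℕ, H.Infinite ∧ ∀ f ∈ 𝒳, ConstOrInjModFin f H) ∧ κ = #𝒳}

namespace ParAux

/-! ### Generic helpers -/

lemma infinite_gt {Y : Set ℕ} (hY : Y.Infinite) (n : ℕ) : ∃ m ∈ Y, n < m :=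
  hY.exists_gt n

/-- Every infinite set of naturals is split by some set. -/
lemma exists_splits {Y : Set ℕ} (hY : Y.Infinite) : ∃ X, Splits X Y := by
  let e := hY.natEmbedding
  have hinj2 : Function.Injective fun k => (e (2 * k) : ℕ) := by
    intro a b h
    have := e.injective (Subtype.coe_injective h)
    omega
  have hinj2' : Function.Injective fun k => (e (2 * k + 1) : ℕ) := by
    intro a b h
    have := e.injective (Subtype.coe_injective h)
    omega
  refine ⟨Set.range fun k => (e (2 * k) : ℕ), ?_, ?_⟩
  · refine (Set.infinite_range_of_injective hinj2).mono ?_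
    rintro x ⟨k, rfl⟩
    exact ⟨⟨k, rfl⟩, (e (2 * k)).2⟩
  · refine (Set.infinite_range_of_injective hinj2').mono ?_
    rintro x ⟨k, rfl⟩
    refine ⟨(e (2 * k + 1)).2, ?_⟩
    rintro ⟨j, hj⟩
    have := e.injective (Subtype.coe_injective hj)
    omega

/-- the `0/1`-indicator of a set defeats a split set. -/
lemma not_constOrInj_of_splits {X H : Set ℕ} (h : Splits X H) :
    ¬ ConstOrInjModFin (X.indicator fun _ => 1) H := by
  rintro ⟨F, hF, -, hcase⟩
  have h1 : ((X ∩ H) \ F).Infinite := h.1.diff hF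
  have h2 : ((H \ X) \ F).Infinite := h.2.diff hF
  obtain ⟨a, ha, b, hb, hab⟩ := h1.nontrivial
  obtain ⟨c, hc⟩ := h2.nonempty
  rcases hcase with ⟨m, hm⟩ | hinj
  · have hA := hm a ⟨ha.1.2, ha.2⟩
    have hC := hm c ⟨hc.1.1, hc.2⟩
    rw [Set.indicator_of_mem ha.1.1] at hA
    rw [Set.indicator_of_notMem hc.1.2] at hC
    omega
  · refine hab (hinj ⟨ha.1.2, ha.2⟩ ⟨hb.1.2, hb.2⟩ ?_)
    rw [Set.indicator_of_mem ha.1.1, Set.indicator_of_mem hb.1.1]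

lemma parSet_nonempty :
    {κ : Cardinal | ∃ 𝒳 : Set (ℕ → ℕ),
      (¬ ∃ H : Set ℕ, H.Infinite ∧ ∀ f ∈ 𝒳, ConstOrInjModFin f H) ∧ κ = #𝒳}.Nonempty := by
  refine ⟨_, Set.univ, ?_, rfl⟩
  rintro ⟨H, hH, hall⟩
  obtain ⟨X, hX⟩ := exists_splits hH
  exact not_constOrInj_of_splits hX (hall _ (Set.mem_univ _))

lemma splitSet_nonempty :
    {c : Cardinal | ∃ S : Set (Set ℕ),
      (∀ Y : Set ℕ, Y.Infinite → ∃ X ∈ S, Splits X Y) ∧ c = #S}.Nonempty := by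
  refine ⟨_, Set.univ, fun Y hY => ?_, rfl⟩
  obtain ⟨X, hX⟩ := exists_splits hY
  exact ⟨X, Set.mem_univ _, hX⟩

lemma boundSet_nonempty :
    {c : Cardinal | ∃ B : Set (ℕ → ℕ),
      (∀ g : ℕ → ℕ, ∃ f ∈ B, ¬ EvMaj g f) ∧ c = #B}.Nonempty := by
  refine ⟨_, Set.univ, fun g => ⟨g, Set.mem_univ _, fun h => ?_⟩, rfl⟩
  obtain ⟨n, hn⟩ := h.exists
  exact lt_irrefl _ hn

lemma exists_unsplit {S : Set (Set ℕ)} (h : #S < splitNum) :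
    ∃ Y : Set ℕ, Y.Infinite ∧ ∀ X ∈ S, ¬ Splits X Y := by
  by_contra hc
  push_neg at hc
  have hmem : #S ∈ {c : Cardinal | ∃ S' : Set (Set ℕ),
      (∀ Y : Set ℕ, Y.Infinite → ∃ X ∈ S', Splits X Y) ∧ c = #S'} := ⟨S, hc, rfl⟩
  exact absurd (csInf_le' hmem) h.not_ge

lemma exists_dominator {T : Set (ℕ → ℕ)} (h : #T < boundNum) :
    ∃ g, ∀ t ∈ T, EvMaj g t := by
  by_contra hc
  push_neg at hc
  have hmem : #T ∈ {c : Cardinal | ∃ B : Set (ℕ → ℕ),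
      (∀ g : ℕ → ℕ, ∃ f ∈ B, ¬ EvMaj g f) ∧ c = #B} := ⟨T, hc, rfl⟩
  exact absurd (csInf_le' hmem) h.not_ge

/-! ### `𝔰` is uncountable -/

lemma aleph0_lt_splitNum : ℵ₀ < splitNum := by
  rcases lt_or_ge ℵ₀ splitNum with h | h
  · exact h
  exfalso
  obtain ⟨S, hS, hcard⟩ := csInf_mem splitSet_nonempty
  have hScount : S.Countable := by
    rw [← Cardinal.le_aleph0_iff_set_countable, ← hcard]
    exact h
  have hSne : S.Nonempty := by
    obtain ⟨X, hX, -⟩ := hS Set.univ Set.infinite_univ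
    exact ⟨X, hX⟩
  obtain ⟨A, rfl⟩ := hScount.exists_eq_range hSne
  classical
  -- diagonal nested sequence
  let B : ℕ → Set ℕ := fun k =>
    Nat.rec Set.univ (fun k Bk => if (Bk ∩ A k).Infinite then Bk ∩ A k else Bk \ A k) k
  have hBsucc : ∀ k, B (k + 1) =
      if (B k ∩ A k).Infinite then B k ∩ A k else B k \ A k := fun k => rfl
  have hBinf : ∀ k, (B k).Infinite := by
    intro k
    induction k with
    | zero => exact Set.infinite_univ
    | succ k ih =>
      rw [hBsucc]
      split_ifs with hsp
      · exact hsp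
      · intro hfin
        apply ih
        have : B k ⊆ (B k ∩ A k) ∪ (B k \ A k) := by
          intro x hx
          by_cases hxa : x ∈ A k
          · exact Or.inl ⟨hx, hxa⟩
          · exact Or.inr ⟨hx, hxa⟩
        exact (((Set.not_infinite.mp hsp).union hfin).subset this)
  have hBsub : ∀ k, B (k + 1) ⊆ B k := by
    intro k
    rw [hBsucc]
    split_ifs
    · exact Set.inter_subset_left
    · exact Set.diff_subset
  have hBalt : ∀ k, B (k + 1) ⊆ A k ∨ ∀ x ∈ B (k + 1), x ∉ A k := by
    intro k
    rw [hBsucc]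
    split_ifs
    · exact Or.inl Set.inter_subset_right
    · exact Or.inr fun x hx => hx.2
  have hBchain : ∀ k j, k ≤ j → B j ⊆ B k := by
    intro k j hkj
    induction hkj with
    | refl => exact fun x hx => hx
    | step h ih => exact fun x hx => ih (hBsub _ hx)
  -- diagonal sequence
  let y : ℕ → ℕ := fun n =>
    Nat.rec 0 (fun k yk => sInf {m | m ∈ B (k + 1) ∧ yk < m}) n
  have hysucc : ∀ k, y (k + 1) = sInf {m | m ∈ B (k + 1) ∧ y k < m} := fun k => rfl
  have hyspec : ∀ k, y (k + 1) ∈ B (k + 1) ∧ y k < y (k + 1) := by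
    intro k
    rw [hysucc]
    have hne : {m | m ∈ B (k + 1) ∧ y k < m}.Nonempty := by
      obtain ⟨m, hm1, hm2⟩ := infinite_gt (hBinf (k + 1)) (y k)
      exact ⟨m, hm1, hm2⟩
    exact Nat.sInf_mem hne
  have hmono : StrictMono y := strictMono_nat_of_lt_succ fun k => (hyspec k).2
  have hYinf : (Set.range y).Infinite := Set.infinite_range_of_injective hmono.injective
  obtain ⟨X, ⟨k, rfl⟩, hsp⟩ := hS (Set.range y) hYinf
  have htail : ∀ j, k + 1 ≤ j → y j ∈ B (k + 1) := by
    intro j hj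
    have : y j ∈ B j := by
      cases j with
      | zero => omega
      | succ j => exact (hyspec j).1
    exact hBchain (k + 1) j hj this
  have hfin : (y '' {j | j ≤ k}).Finite := (Set.finite_le_nat k).image y
  rcases hBalt k with hin | hout
  · -- range y \ A k is finite
    refine Set.not_infinite.mpr (hfin.subset ?_) hsp.2
    rintro x ⟨⟨j, rfl⟩, hx⟩
    refine ⟨j, ?_, rfl⟩
    simp only [Set.mem_setOf_eq]
    by_contra hj
    exact hx (hin (htail j (by omega)))
  · refine Set.not_infinite.mpr (hfin.subset ?_) hsp.1
    rintro x ⟨hxA, ⟨j, rfl⟩⟩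
    refine ⟨j, ?_, rfl⟩
    simp only [Set.mem_setOf_eq]
    by_contra hj
    exact hout _ (htail j (by omega)) hxA

/-! ### `parNum1c ≤ boundNum` -/

/-- A strictly monotone majorant of `f`. -/
def Ff (f : ℕ → ℕ) (n : ℕ) : ℕ := n + ∑ i ∈ Finset.range (n + 1), f i

lemma Ff_strictMono (f : ℕ → ℕ) : StrictMono (Ff f) := by
  intro a b hab
  have hsum : ∑ i ∈ Finset.range (a + 1), f i ≤ ∑ i ∈ Finset.range (b + 1), f i :=
    Finset.sum_le_sum_of_subset (Finset.range_subset_range.mpr (by omega))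
  unfold Ff
  omega

lemma le_Ff {f : ℕ → ℕ} {i n : ℕ} (h : i ≤ n) : f i ≤ Ff f n := by
  have : f i ≤ ∑ j ∈ Finset.range (n + 1), f j :=
    Finset.single_le_sum (fun j _ => Nat.zero_le (f j)) (Finset.mem_range.mpr (by omega))
  unfold Ff
  omega

lemma self_le_Ff (f : ℕ → ℕ) (n : ℕ) : n ≤ Ff f n := Nat.le_add_right _ _

/-- The block endpoints determined by `f`. -/
def af (f : ℕ → ℕ) : ℕ → ℕ
  | 0 => 0
  | k + 1 => Ff f (af f k) + 1

lemma af_strictMono (f : ℕ → ℕ) : StrictMono (af f) :=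
  strictMono_nat_of_lt_succ fun k => by
    have := self_le_Ff f (af f k)
    show af f k < Ff f (af f k) + 1
    omega

lemma le_af (f : ℕ → ℕ) (k : ℕ) : k ≤ af f k := (af_strictMono f).le_apply

/-- The block index of `n`. -/
def cf (f : ℕ → ℕ) (n : ℕ) : ℕ := Nat.findGreatest (fun k => af f k ≤ n) n

lemma af_cf_le (f : ℕ → ℕ) (n : ℕ) : af f (cf f n) ≤ n :=
  Nat.findGreatest_spec (P := fun k => af f k ≤ n) (Nat.zero_le n) (Nat.zero_le n)

lemma le_cf {f : ℕ → ℕ} {k n : ℕ} (h : af f k ≤ n) : k ≤ cf f n :=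
  Nat.le_findGreatest (P := fun k => af f k ≤ n) (le_trans (le_af f k) h) h

lemma lt_af_cf_succ (f : ℕ → ℕ) (n : ℕ) : n < af f (cf f n + 1) := by
  by_contra hcon
  push_neg at hcon
  have := le_cf hcon
  omega

lemma cf_le_of_lt {f : ℕ → ℕ} {k n : ℕ} (h : n < af f (k + 1)) : cf f n ≤ k := by
  by_contra hcon
  push_neg at hcon
  have h1 : af f (k + 1) ≤ af f (cf f n) := (af_strictMono f).monotone hcon
  have h2 := af_cf_le f n
  omega

lemma parNum1c_le_boundNum : parNum1c ≤ boundNum := by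
  obtain ⟨B, hB, hcard⟩ := csInf_mem boundSet_nonempty
  have hprop : ¬ ∃ H : Set ℕ, H.Infinite ∧ ∀ f ∈ (fun f => cf f) '' B, ConstOrInjModFin f H := by
    rintro ⟨H, hH, hall⟩
    have h3 : ∀ n : ℕ, ∃ b, ∃ x ∈ H, ∃ y ∈ H, ∃ z ∈ H, n < x ∧ x < y ∧ y < z ∧ z < b := by
      intro n
      obtain ⟨x, hx, hnx⟩ := infinite_gt hH n
      obtain ⟨y, hy, hxy⟩ := infinite_gt hH x
      obtain ⟨z, hz, hyz⟩ := infinite_gt hH y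
      exact ⟨z + 1, x, hx, y, hy, z, hz, hnx, hxy, hyz, Nat.lt_succ_self z⟩
    choose g hg using h3
    obtain ⟨f, hfB, hnm⟩ := hB g
    have hio : ∀ N, ∃ n, N ≤ n ∧ g n ≤ f n := by
      intro N
      rw [EvMaj, Filter.not_eventually] at hnm
      obtain ⟨n, hn1, hn2⟩ := (Filter.frequently_atTop.mp hnm) N
      exact ⟨n, hn1, Nat.le_of_not_lt hn2⟩
    have hcol : ∀ N, ∃ x y, x ∈ H ∧ y ∈ H ∧ N < x ∧ x < y ∧ cf f x = cf f y := by
      intro N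
      obtain ⟨n, hNn, hgf⟩ := hio N
      obtain ⟨x, hx, y, hy, z, hz, hnx, hxy, hyz, hzg⟩ := hg n
      have hbnd : ∀ w, n < w → w < g n → cf f n ≤ cf f w ∧ cf f w ≤ cf f n + 1 := by
        intro w hnw hwg
        constructor
        · exact le_cf (le_trans (af_cf_le f n) (le_of_lt hnw))
        · apply cf_le_of_lt
          have h1 : n + 1 ≤ af f (cf f n + 1) := lt_af_cf_succ f n
          have h2 : f n ≤ Ff f (af f (cf f n + 1)) := le_Ff (by omega)
          have h3 : af f (cf f n + 1 + 1) = Ff f (af f (cf f n + 1)) + 1 := rfl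
          omega
      have hbx := hbnd x hnx (by omega)
      have hby := hbnd y (by omega) (by omega)
      have hbz := hbnd z (by omega) (by omega)
      have hpig : cf f x = cf f y ∨ cf f y = cf f z ∨ cf f x = cf f z := by omega
      rcases hpig with hp | hp | hp
      · exact ⟨x, y, hx, hy, by omega, hxy, hp⟩
      · exact ⟨y, z, hy, hz, by omega, hyz, hp⟩
      · exact ⟨x, z, hx, hz, by omega, by omega, hp⟩
    obtain ⟨F, hFfin, hFH, hcase⟩ := hall (cf f) ⟨f, hfB, rfl⟩
    obtain ⟨bF, hbF⟩ := hFfin.bddAbove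
    rcases hcase with ⟨m, hm⟩ | hinj
    · obtain ⟨x, hxH, hxgt⟩ := infinite_gt hH (max bF (af f (m + 1)))
      have hb1 : bF ≤ max bF (af f (m + 1)) := le_max_left _ _
      have hb2 : af f (m + 1) ≤ max bF (af f (m + 1)) := le_max_right _ _
      have hxF : x ∉ F := fun hx => by have := hbF hx; omega
      have h1 : m + 1 ≤ cf f x := le_cf (by omega)
      have h2 := hm x ⟨hxH, hxF⟩
      omega
    · obtain ⟨x, y, hxH, hyH, hNx, hxy, hcfeq⟩ := hcol bF
      have hxF : x ∉ F := fun hx => by have := hbF hx; omega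
      have hyF : y ∉ F := fun hy => by have := hbF hy; omega
      exact absurd (hinj ⟨hxH, hxF⟩ ⟨hyH, hyF⟩ hcfeq) (Nat.ne_of_lt hxy)
  have h1 : parNum1c ≤ #((fun f => cf f) '' B) := by
    have hmem : #((fun f => cf f) '' B) ∈ {κ : Cardinal | ∃ 𝒳 : Set (ℕ → ℕ),
        (¬ ∃ H : Set ℕ, H.Infinite ∧ ∀ f ∈ 𝒳, ConstOrInjModFin f H) ∧ κ = #𝒳} :=
      ⟨_, hprop, rfl⟩
    exact csInf_le' hmem
  calc parNum1c ≤ #((fun f => cf f) '' B) := h1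
    _ ≤ #B := Cardinal.mk_image_le
    _ = boundNum := hcard.symm

lemma parNum1c_le_splitNum : parNum1c ≤ splitNum := by
  obtain ⟨S, hS, hcard⟩ := csInf_mem splitSet_nonempty
  have hprop : ¬ ∃ H : Set ℕ, H.Infinite ∧
      ∀ f ∈ (fun X : Set ℕ => X.indicator fun _ => 1) '' S, ConstOrInjModFin f H := by
    rintro ⟨H, hH, hall⟩
    obtain ⟨X, hXS, hsp⟩ := hS H hH
    exact not_constOrInj_of_splits hsp (hall _ ⟨X, hXS, rfl⟩)
  have h1 : parNum1c ≤ #((fun X : Set ℕ => X.indicator fun _ => 1) '' S) := by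
    have hmem : #((fun X : Set ℕ => X.indicator fun _ => 1) '' S) ∈ {κ : Cardinal |
        ∃ 𝒳 : Set (ℕ → ℕ),
        (¬ ∃ H : Set ℕ, H.Infinite ∧ ∀ f ∈ 𝒳, ConstOrInjModFin f H) ∧ κ = #𝒳} :=
      ⟨_, hprop, rfl⟩
    exact csInf_le' hmem
  calc parNum1c ≤ _ := h1
    _ ≤ #S := Cardinal.mk_image_le
    _ = splitNum := hcard.symm

/-! ### `min boundNum splitNum ≤ parNum1c` -/

/-- the least element of the fiber of `f` containing `n`. -/
def kk (f : ℕ → ℕ) (n : ℕ) : ℕ := Nat.find (⟨n, rfl⟩ : ∃ m, f m = f n)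

lemma f_kk (f : ℕ → ℕ) (n : ℕ) : f (kk f n) = f n := Nat.find_spec (⟨n, rfl⟩ : ∃ m, f m = f n)

lemma kk_le (f : ℕ → ℕ) (n : ℕ) : kk f n ≤ n := Nat.find_min' _ rfl

lemma kk_eq {f : ℕ → ℕ} {a b : ℕ} (h : f a = f b) : kk f a = kk f b := by
  apply le_antisymm
  · exact Nat.find_min' _ ((f_kk f b).trans h.symm)
  · exact Nat.find_min' _ ((f_kk f a).trans h)

lemma min_le_parNum1c : min boundNum splitNum ≤ parNum1c := by
  classical
  obtain ⟨𝒳, hprop, hcard⟩ := csInf_mem parSet_nonempty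
  have hcard' : parNum1c = #𝒳 := hcard
  rw [hcard']
  by_contra hcon
  push_neg at hcon
  rw [lt_min_iff] at hcon
  obtain ⟨hblt, hslt⟩ := hcon
  apply hprop
  -- ### Round 1: stabilize the bits of `kk f` on an unsplit set `Y`
  have hcard₁ : #({X : Set ℕ | ∃ f ∈ 𝒳, ∃ i : ℕ, X = {n | Nat.testBit (kk f n) i}}) < splitNum := by
    have hsurj : Function.Surjective (fun p : ↥𝒳 × ℕ =>
        (⟨{n | Nat.testBit (kk (p.1 : ℕ → ℕ) n) p.2},
          ⟨(p.1 : ℕ → ℕ), p.1.2, p.2, rfl⟩⟩ :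
          ↥{X : Set ℕ | ∃ f ∈ 𝒳, ∃ i : ℕ, X = {n | Nat.testBit (kk f n) i}})) := by
      rintro ⟨X, f, hf, i, rfl⟩
      exact ⟨(⟨f, hf⟩, i), rfl⟩
    have h1 := Cardinal.mk_le_of_surjective hsurj
    have h2 : #(↥𝒳 × ℕ) = #𝒳 * ℵ₀ := by
      rw [Cardinal.mk_prod]
      simp
    rw [h2] at h1
    exact lt_of_le_of_lt h1
      (Cardinal.mul_lt_of_lt aleph0_lt_splitNum.le hslt aleph0_lt_splitNum)
  obtain ⟨Y, hYinf, hYuns⟩ := exists_unsplit hcard₁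
  -- at most one value is attained infinitely often by `kk f` on `Y`
  have hVuniq : ∀ f ∈ 𝒳, ∀ v w : ℕ, {n | n ∈ Y ∧ kk f n = v}.Infinite →
      {n | n ∈ Y ∧ kk f n = w}.Infinite → v = w := by
    intro f hf v w hv hw
    by_contra hvw
    have hbit : ∃ i, Nat.testBit v i ≠ Nat.testBit w i := by
      by_contra hbit
      push_neg at hbit
      exact hvw (Nat.eq_of_testBit_eq hbit)
    obtain ⟨i, hi⟩ := hbit
    have hXmem : {n | Nat.testBit (kk f n) i} ∈
        {X : Set ℕ | ∃ f ∈ 𝒳, ∃ i : ℕ, X = {n | Nat.testBit (kk f n) i}} := ⟨f, hf, i, rfl⟩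
    apply hYuns _ hXmem
    have hsubT : ∀ u : ℕ, Nat.testBit u i = true →
        {n | n ∈ Y ∧ kk f n = u} ⊆ {n | Nat.testBit (kk f n) i} ∩ Y := by
      rintro u hu n ⟨hnY, hnk⟩
      refine ⟨?_, hnY⟩
      show Nat.testBit (kk f n) i
      rw [hnk, hu]
    have hsubF : ∀ u : ℕ, Nat.testBit u i = false →
        {n | n ∈ Y ∧ kk f n = u} ⊆ Y \ {n | Nat.testBit (kk f n) i} := by
      rintro u hu n ⟨hnY, hnk⟩
      refine ⟨hnY, ?_⟩
      show ¬ Nat.testBit (kk f n) i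
      rw [hnk, hu]
      exact Bool.false_ne_true
    cases hvb : Nat.testBit v i <;> cases hwb : Nat.testBit w i
    · rw [hvb, hwb] at hi; exact absurd rfl hi
    · exact ⟨hw.mono (hsubT w hwb), hv.mono (hsubF v hvb)⟩
    · exact ⟨hv.mono (hsubT v hvb), hw.mono (hsubF w hwb)⟩
    · rw [hvb, hwb] at hi; exact absurd rfl hi
  -- the candidate constant value and its fiber
  set M : (ℕ → ℕ) → ℕ := fun f => sInf {v | {n | n ∈ Y ∧ kk f n = v}.Infinite} with hM
  set E : (ℕ → ℕ) → Set ℕ := fun f => {n | kk f n = M f} with hE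
  have hVM : ∀ f ∈ 𝒳, ∀ v : ℕ, {n | n ∈ Y ∧ kk f n = v}.Infinite → v = M f := by
    intro f hf v hv
    have hmem : {n | n ∈ Y ∧ kk f n = M f}.Infinite := by
      have h1 : M f ∈ {v' | {n | n ∈ Y ∧ kk f n = v'}.Infinite} := by
        rw [hM]
        exact Nat.sInf_mem ⟨v, hv⟩
      exact h1
    exact hVuniq f hf v (M f) hv hmem
  -- ### Round 2: unsplit for the sets `E f`, inside `Y`
  let e2 : ℕ ↪ ↥Y := Set.Infinite.natEmbedding Y hYinf
  let q : ℕ → ℕ := fun j => (e2 j).1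
  have hqY : ∀ j, q j ∈ Y := fun j => (e2 j).2
  have hqinj : Function.Injective q := fun a b hab =>
    e2.injective (Subtype.coe_injective hab)
  have hcard₂ : #((fun f => q ⁻¹' (E f)) '' 𝒳) < splitNum :=
    lt_of_le_of_lt Cardinal.mk_image_le hslt
  obtain ⟨W, hWinf, hWuns⟩ := exists_unsplit hcard₂
  set Y₂ : Set ℕ := q '' W with hY₂
  have hY₂Y : Y₂ ⊆ Y := by rintro x ⟨w, hw, rfl⟩; exact hqY w
  have hY₂inf : Y₂.Infinite := hWinf.image hqinj.injOn
  have hdich : ∀ f ∈ 𝒳, (E f ∩ Y₂).Finite ∨ (Y₂ \ E f).Finite := by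
    intro f hf
    have huns := hWuns _ ⟨f, hf, rfl⟩
    rw [Splits] at huns
    rcases not_and_or.mp huns with hfin | hfin
    · left
      have h' : (q ⁻¹' E f ∩ W).Finite := Set.not_infinite.mp hfin
      refine (h'.image q).subset ?_
      rintro x ⟨hxE, w, hw, rfl⟩
      exact ⟨w, ⟨hxE, hw⟩, rfl⟩
    · right
      have h' : (W \ q ⁻¹' E f).Finite := Set.not_infinite.mp hfin
      refine (h'.image q).subset ?_
      rintro x ⟨⟨w, hw, rfl⟩, hxE⟩
      exact ⟨w, ⟨hw, hxE⟩, rfl⟩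
  -- ### Round 3: on `Y₂`, fibers other than `E f` escape to infinity
  have hsmall : ∀ f ∈ 𝒳, (E f ∩ Y₂).Finite → ∀ C : ℕ,
      ∃ N, ∀ n ∈ Y₂, N ≤ n → C < kk f n := by
    intro f hf hEf C
    have hfin : ∀ v : ℕ, {n | n ∈ Y₂ ∧ kk f n = v}.Finite := by
      intro v
      by_cases hv : {n | n ∈ Y ∧ kk f n = v}.Infinite
      · have hvM : v = M f := hVM f hf v hv
        refine hEf.subset ?_
        rintro n ⟨hn, hkv⟩
        exact ⟨show kk f n = M f by rw [hkv, hvM], hn⟩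
      · refine (Set.not_infinite.mp hv).subset ?_
        rintro n ⟨hn, hkv⟩
        exact ⟨hY₂Y hn, hkv⟩
    have hBadfin : {n | n ∈ Y₂ ∧ kk f n ≤ C}.Finite := by
      have hsub : {n | n ∈ Y₂ ∧ kk f n ≤ C} ⊆
          ⋃ v ∈ Set.Iic C, {n | n ∈ Y₂ ∧ kk f n = v} := by
        rintro n ⟨hn, hle⟩
        exact Set.mem_biUnion (Set.mem_Iic.mpr hle) ⟨hn, rfl⟩
      exact ((Set.finite_Iic C).biUnion fun v _ => hfin v).subset hsub
    obtain ⟨b, hb⟩ := hBadfin.bddAbove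
    refine ⟨b + 1, fun n hn hbn => ?_⟩
    by_contra hcon2
    push_neg at hcon2
    have hmem : n ∈ {n | n ∈ Y₂ ∧ kk f n ≤ C} := ⟨hn, hcon2⟩
    have := hb hmem
    omega
  -- ### Round 4: a dominating function
  set t : (ℕ → ℕ) → ℕ → ℕ := fun f C => sInf {N | ∀ n ∈ Y₂, N ≤ n → C < kk f n} with ht
  have hcard₃ : #(t '' 𝒳) < boundNum := lt_of_le_of_lt Cardinal.mk_image_le hblt
  obtain ⟨g, hg⟩ := exists_dominator hcard₃
  -- ### Build the homogeneous set `H`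
  let h : ℕ → ℕ := fun n =>
    Nat.rec (sInf Y₂) (fun _ prev => sInf {m | m ∈ Y₂ ∧ max (g prev) prev < m}) n
  have hh0 : h 0 ∈ Y₂ := Nat.sInf_mem hY₂inf.nonempty
  have hhsucc : ∀ n, h (n + 1) ∈ Y₂ ∧ max (g (h n)) (h n) < h (n + 1) := by
    intro n
    have hne : {m | m ∈ Y₂ ∧ max (g (h n)) (h n) < m}.Nonempty := by
      obtain ⟨m, h1, h2⟩ := infinite_gt hY₂inf (max (g (h n)) (h n))
      exact ⟨m, h1, h2⟩
    exact Nat.sInf_mem hne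
  have hhY₂ : ∀ n, h n ∈ Y₂ := by
    intro n
    cases n with
    | zero => exact hh0
    | succ n => exact (hhsucc n).1
  have hhmono : StrictMono h := strictMono_nat_of_lt_succ fun n => by
    have h1 := (hhsucc n).2
    have h2 : h n ≤ max (g (h n)) (h n) := le_max_right _ _
    omega
  refine ⟨Set.range h, Set.infinite_range_of_injective hhmono.injective, ?_⟩
  intro f hf
  rcases hdich f hf with hEfin | hYEfin
  · -- injective case
    have hev : ∀ᶠ C in Filter.atTop, t f C < g C := hg (t f) ⟨f, hf, rfl⟩
    obtain ⟨N₁, hN₁⟩ := Filter.eventually_atTop.mp hev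
    refine ⟨{x | x ∈ Set.range h ∧ x < h N₁}, ?_, fun x hx => hx.1, Or.inr ?_⟩
    · exact (Set.finite_lt_nat (h N₁)).subset fun x hx => hx.2
    · have hspec : ∀ C, ∀ n ∈ Y₂, t f C ≤ n → C < kk f n := by
        intro C
        have hne : {N | ∀ n ∈ Y₂, N ≤ n → C < kk f n}.Nonempty := by
          obtain ⟨N, hN⟩ := hsmall f hf hEfin C
          exact ⟨N, hN⟩
        exact Nat.sInf_mem hne
      have hkey : ∀ n, N₁ ≤ n → h n < kk f (h (n + 1)) := by
        intro n hn
        have h1 : h N₁ ≤ h n := hhmono.monotone hn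
        have h2 : N₁ ≤ h n := le_trans hhmono.le_apply h1
        have h3 : t f (h n) < g (h n) := hN₁ (h n) h2
        have h4 := (hhsucc n).2
        have h5 : g (h n) ≤ max (g (h n)) (h n) := le_max_left _ _
        exact hspec (h n) (h (n + 1)) (hhY₂ (n + 1)) (by omega)
      rintro a ⟨⟨i, rfl⟩, haF⟩ b ⟨⟨j, rfl⟩, hbF⟩ hfab
      have hiN : N₁ ≤ i := by
        by_contra hlt
        exact haF ⟨⟨i, rfl⟩, hhmono (by omega)⟩
      have hjN : N₁ ≤ j := by
        by_contra hlt
        exact hbF ⟨⟨j, rfl⟩, hhmono (by omega)⟩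
      have hk := kk_eq hfab
      rcases lt_trichotomy i j with hij | rfl | hij
      · exfalso
        have hj1 : h (j - 1) < kk f (h (j - 1 + 1)) := hkey (j - 1) (by omega)
        have hj2 : j - 1 + 1 = j := by omega
        rw [hj2] at hj1
        have h6 : h i ≤ h (j - 1) := hhmono.monotone (by omega)
        have h7 := kk_le f (h i)
        omega
      · rfl
      · exfalso
        have hj1 : h (i - 1) < kk f (h (i - 1 + 1)) := hkey (i - 1) (by omega)
        have hj2 : i - 1 + 1 = i := by omega
        rw [hj2] at hj1
        have h6 : h j ≤ h (i - 1) := hhmono.monotone (by omega)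
        have h7 := kk_le f (h j)
        omega
  · -- constant case
    refine ⟨{x | x ∈ Set.range h ∧ x ∉ E f}, ?_, fun x hx => hx.1, Or.inl ⟨f (M f), ?_⟩⟩
    · refine hYEfin.subset ?_
      rintro x ⟨⟨n, rfl⟩, hxE⟩
      exact ⟨hhY₂ n, hxE⟩
    · rintro n ⟨hnH, hnF⟩
      have hnE : n ∈ E f := by
        by_contra hne
        exact hnF ⟨hnH, hne⟩
      have hkM : kk f n = M f := hnE
      exact ((f_kk f n).symm).trans (congrArg f hkM)

end ParAux

theorem parNum1c_eq_min : parNum1c = min boundNum splitNum :=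
  le_antisymm (le_min ParAux.parNum1c_le_boundNum ParAux.parNum1c_le_splitNum)
    ParAux.min_le_parNum1c
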